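/- For all nonnegative integers j₁ and j₀, the number of triples (p,q,r) of nonnegative integers satisfying 0 ≤ p ≤ j₀, p ≤ q ≤ p + j₁, and 0 ≤ r ≤ j₀ + q − 2p equals (j₁+1)(j₀+1)(j₁+j₀+2)/2. (This says that the parameterization b = f̃₀^r f̃₁^q f̃₀^p (highest weight vector) of the A₂-crystal B^{A₂}(j₁Λ₁+j₀Λ₀) by such triples matches the Weyl dimension formula.) -/
import Mathlib


open Finset

lemma aux_row (n c : ℕ) : 2 * ∑ s ∈ range n, (c + s + 1) = n * (2 * c + n + 1) := by
  induction n with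
  | zero => simp
  | succ n ih =>
    rw [Finset.sum_range_succ, Nat.mul_add, ih]
    ring

lemma aux_grid (m n : ℕ) :
    2 * ∑ p ∈ range m, ∑ s ∈ range n, (p + s + 1) = n * m * (m + n) := by
  induction m with
  | zero => simp
  | succ m ih =>
    rw [Finset.sum_range_succ, Nat.mul_add, ih, aux_row]
    ring

/-- The number of triples (p,q,r) of nonnegative integers with 0 ≤ p ≤ j₀, p ≤ q ≤ p + j₁,
0 ≤ r ≤ j₀ + q − 2p equals (j₁+1)(j₀+1)(j₁+j₀+2)/2, the cardinality of B^{A₂}(j₁Λ₁+j₀Λ₀). -/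
theorem stmt_3 (j1 j0 : ℕ) :
    ((range (j0 + 1)).sigma fun p =>
      (Icc p (p + j1)).sigma fun q => range (j0 + q - 2 * p + 1)).card =
    (j1 + 1) * (j0 + 1) * (j1 + j0 + 2) / 2 := by
  rw [Finset.card_sigma]
  simp only [Finset.card_sigma, Finset.card_range]
  have key : ∑ p ∈ range (j0 + 1), ∑ q ∈ Icc p (p + j1), (j0 + q - 2 * p + 1)
      = ∑ p ∈ range (j0 + 1), ∑ s ∈ range (j1 + 1), (p + s + 1) := by
    rw [← Finset.sum_range_reflect (fun p => ∑ s ∈ range (j1 + 1), (p + s + 1)) (j0 + 1)]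
    refine Finset.sum_congr rfl fun p hp => ?_
    rw [Finset.mem_range] at hp
    have hrow : ∀ m, ∑ q ∈ Icc p (p + m), (j0 + q - 2 * p + 1)
        = ∑ s ∈ range (m + 1), (j0 - p + s + 1) := by
      intro m
      induction m with
      | zero => simp; omega
      | succ m ihm =>
        rw [← Nat.add_assoc, Finset.sum_Icc_succ_top (by omega), ihm]
        conv_rhs => rw [Finset.sum_range_succ]
        omega
    rw [hrow]
    refine Finset.sum_congr (by congr 1) fun s hs => ?_
    rw [Finset.mem_range] at hs
    omega
  rw [key]
  have h2 : (j1 + 1) * (j0 + 1) * (j1 + j0 + 2)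
      = 2 * ∑ p ∈ range (j0 + 1), ∑ s ∈ range (j1 + 1), (p + s + 1) := by
    rw [aux_grid]; ring
  rw [h2, Nat.mul_div_cancel_left _ (by norm_num)]
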